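/- arXiv:2207.12774 — 2 statements merged into one kernel-verified Lean document; each statement's English description precedes it below -/
import Mathlib

section
/- (Gyöngy–Krylov characterization of convergence in probability.) Let (Ω, 𝔉, ℙ) be a probability space, let X̄ be a complete separable metric space, and let X_n : Ω → X̄ (n ∈ ℕ) be measurable maps. Then the following are equivalent. (i) There exists a measurable X : Ω → X̄ such that X_n → X in probability, i.e. for every ε > 0, ℙ(dist(X_n, X) > ε) → 0 as n → ∞. (ii) For every pair of strictly increasing sequences (n_k)_{k∈ℕ} and (m_k)_{k∈ℕ} of natural numbers, there exists a further subsequence (k′) and a Borel probability measure μ on X̄ × X̄ such that the joint laws of (X_{n_{k′}}, X_{m_{k′}}) converge weakly to μ as k′ → ∞, and μ({(x,y) ∈ X̄ × X̄ : x = y}) = 1. -/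
open MeasureTheory Filter
open scoped ENNReal NNReal Topology

set_option linter.unusedSectionVars false

section Aux

variable {Ω : Type*} [MeasurableSpace Ω] (P : Measure Ω) [IsProbabilityMeasure P]
    {Xbar : Type*} [MetricSpace Xbar] [CompleteSpace Xbar]
    [TopologicalSpace.SeparableSpace Xbar] [MeasurableSpace Xbar] [BorelSpace Xbar]

/-- Convergence in probability (strict-inequality form) implies `TendstoInMeasure`. -/
lemma stmt7_aux_tim {X : ℕ → Ω → Xbar} {Y : Ω → Xbar}
    (hY : ∀ ε : ℝ, 0 < ε →
      Tendsto (fun n => P {ω | ε < dist (X n ω) (Y ω)}) atTop (nhds 0)) :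
    TendstoInMeasure P X atTop Y := by
  rw [tendstoInMeasure_iff_dist]
  intro ε hε
  have h2 := hY (ε / 2) (by linarith)
  refine tendsto_of_tendsto_of_tendsto_of_le_of_le tendsto_const_nhds h2
    (fun k => zero_le) (fun k => measure_mono ?_)
  intro ω hω
  have : ε ≤ dist (X k ω) (Y ω) := hω
  simp only [Set.mem_setOf_eq]
  linarith

end Aux

/-- The Gyöngy–Krylov characterization of convergence in probability
(Lemma 8.1 of the paper): a sequence of random variables with values in a
Polish space converges in probability iff for every pair of subsequences there
is a further joint subsequence whose joint laws converge weakly to a measure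
concentrated on the diagonal. -/
theorem stmt7 {Ω : Type*} [MeasurableSpace Ω] (P : Measure Ω) [IsProbabilityMeasure P]
    {Xbar : Type*} [MetricSpace Xbar] [CompleteSpace Xbar]
    [TopologicalSpace.SeparableSpace Xbar] [MeasurableSpace Xbar] [BorelSpace Xbar]
    (X : ℕ → Ω → Xbar) (hX : ∀ n, Measurable (X n)) :
    (∃ Y : Ω → Xbar, Measurable Y ∧
        ∀ ε : ℝ, 0 < ε →
          Filter.Tendsto (fun n => P {ω | ε < dist (X n ω) (Y ω)})
            Filter.atTop (nhds 0)) ↔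
    (∀ n m : ℕ → ℕ, StrictMono n → StrictMono m →
      ∃ φ : ℕ → ℕ, StrictMono φ ∧
      ∃ μ : Measure (Xbar × Xbar), IsProbabilityMeasure μ ∧
        (∀ f : BoundedContinuousFunction (Xbar × Xbar) ℝ,
          Filter.Tendsto (fun k => ∫ ω, f (X (n (φ k)) ω, X (m (φ k)) ω) ∂P)
            Filter.atTop (nhds (∫ q, f q ∂μ))) ∧
        μ {q : Xbar × Xbar | q.1 = q.2} = 1) := by
  haveI : SecondCountableTopology Xbar := UniformSpace.secondCountable_of_separable Xbar
  have hdiag_meas : MeasurableSet {q : Xbar × Xbar | q.1 = q.2} :=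
    (isClosed_eq continuous_fst continuous_snd).measurableSet
  constructor
  · -- (i) → (ii)
    rintro ⟨Y, hYm, hY⟩ n m hn hm
    have hTIM : TendstoInMeasure P X atTop Y := stmt7_aux_tim P hY
    have hTIMn : TendstoInMeasure P (fun k => X (n k)) atTop Y := fun ε hε =>
      (hTIM ε hε).comp hn.tendsto_atTop
    obtain ⟨φ₁, hφ₁, hae₁⟩ := hTIMn.exists_seq_tendsto_ae
    have hTIMm : TendstoInMeasure P (fun k => X (m (φ₁ k))) atTop Y := fun ε hε =>
      (hTIM ε hε).comp (hm.comp hφ₁).tendsto_atTop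
    obtain ⟨φ₂, hφ₂, hae₂⟩ := hTIMm.exists_seq_tendsto_ae
    refine ⟨φ₁ ∘ φ₂, hφ₁.comp hφ₂, Measure.map (fun ω => (Y ω, Y ω)) P, ?_, ?_, ?_⟩
    · exact Measure.isProbabilityMeasure_map (hYm.prodMk hYm).aemeasurable
    · intro f
      have hmap : ∫ q, f q ∂(Measure.map (fun ω => (Y ω, Y ω)) P)
          = ∫ ω, f (Y ω, Y ω) ∂P :=
        integral_map (hYm.prodMk hYm).aemeasurable f.continuous.aestronglyMeasurable
      rw [hmap]
      have hae₁' : ∀ᵐ ω ∂P,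
          Tendsto (fun k => X (n ((φ₁ ∘ φ₂) k)) ω) atTop (𝓝 (Y ω)) :=
        hae₁.mono fun ω h => h.comp hφ₂.tendsto_atTop
      refine tendsto_integral_of_dominated_convergence (fun _ => ‖f‖) ?_ ?_ ?_ ?_
      · intro k
        exact (f.continuous.measurable.comp
          (((hX _).prodMk (hX _)))).aestronglyMeasurable
      · exact integrable_const _
      · intro k
        exact Filter.Eventually.of_forall fun ω => f.norm_coe_le_norm _
      · filter_upwards [hae₁', hae₂] with ω h1 h2
        exact (f.continuous.tendsto _).comp (h1.prodMk_nhds h2)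
    · rw [Measure.map_apply (hYm.prodMk hYm) hdiag_meas]
      have : (fun ω => (Y ω, Y ω)) ⁻¹' {q : Xbar × Xbar | q.1 = q.2} = Set.univ := by
        ext ω; simp
      rw [this]
      exact measure_univ
  · -- (ii) → (i)
    intro h
    -- Step 1: Cauchy in probability.
    have key : ∀ ε : ℝ, 0 < ε → ∀ δ : ℝ≥0∞, 0 < δ → ∃ M : ℕ, ∀ p, M ≤ p → ∀ q, M ≤ q →
        P {ω | ε ≤ dist (X p ω) (X q ω)} < δ := by
      intro ε hε δ hδ
      by_contra hcon
      push_neg at hcon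
      choose p hp q hq hδle using hcon
      set s : ℕ → ℕ := fun k => Nat.rec 0 (fun _ prev => max (p prev) (q prev) + 1) k with hs
      have hs_succ : ∀ k, s (k + 1) = max (p (s k)) (q (s k)) + 1 := fun k => rfl
      have hn' : StrictMono (fun k => p (s k)) := by
        refine strictMono_nat_of_lt_succ fun k => ?_
        have h1 : s (k + 1) ≤ p (s (k + 1)) := hp _
        have h2 : p (s k) < s (k + 1) := by
          rw [hs_succ]; exact Nat.lt_succ_of_le (le_max_left _ _)
        exact lt_of_lt_of_le h2 h1
      have hm' : StrictMono (fun k => q (s k)) := by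
        refine strictMono_nat_of_lt_succ fun k => ?_
        have h1 : s (k + 1) ≤ q (s (k + 1)) := hq _
        have h2 : q (s k) < s (k + 1) := by
          rw [hs_succ]; exact Nat.lt_succ_of_le (le_max_right _ _)
        exact lt_of_lt_of_le h2 h1
      obtain ⟨φ, hφ, μ, hμprob, hweak, hdiag⟩ := h _ _ hn' hm'
      -- the pair maps and their laws
      set g : ℕ → Ω → Xbar × Xbar :=
        fun k ω => (X (p (s (φ k))) ω, X (q (s (φ k))) ω) with hg
      have hgm : ∀ k, Measurable (g k) := fun k => (hX _).prodMk (hX _)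
      haveI : ∀ k, IsProbabilityMeasure (Measure.map (g k) P) := fun k =>
        Measure.isProbabilityMeasure_map (hgm k).aemeasurable
      set νP : ℕ → ProbabilityMeasure (Xbar × Xbar) :=
        fun k => ⟨Measure.map (g k) P, inferInstance⟩ with hνP
      set μP : ProbabilityMeasure (Xbar × Xbar) := ⟨μ, hμprob⟩ with hμP
      have hconv : Tendsto νP atTop (𝓝 μP) := by
        rw [ProbabilityMeasure.tendsto_iff_forall_integral_tendsto]
        intro f
        have heq : ∀ k, ∫ x, f x ∂(νP k : Measure (Xbar × Xbar))
            = ∫ ω, f (g k ω) ∂P := fun k =>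
          integral_map (hgm k).aemeasurable f.continuous.aestronglyMeasurable
        simp only [heq]
        exact hweak f
      -- the closed set away from the diagonal
      set C : Set (Xbar × Xbar) := {x | ε ≤ dist x.1 x.2} with hC
      have hC_closed : IsClosed C := isClosed_Ici.preimage continuous_dist
      have hlimsup := ProbabilityMeasure.limsup_measure_closed_le_of_tendsto hconv hC_closed
      have hμC : (μP : Measure (Xbar × Xbar)) C = 0 := by
        have hsub : C ⊆ {q : Xbar × Xbar | q.1 = q.2}ᶜ := by
          intro x hx hxd
          have : dist x.1 x.2 = 0 := by
            simp only [Set.mem_setOf_eq] at hxd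
            rw [hxd, dist_self]
          have hx' : ε ≤ dist x.1 x.2 := hx
          rw [this] at hx'
          linarith
        have hcompl : (μP : Measure (Xbar × Xbar)) {q : Xbar × Xbar | q.1 = q.2}ᶜ = 0 := by
          rw [measure_compl hdiag_meas (measure_ne_top _ _)]
          have : (μP : Measure (Xbar × Xbar)) {q : Xbar × Xbar | q.1 = q.2} = 1 := hdiag
          rw [this, measure_univ, tsub_self]
        exact le_antisymm (le_trans (measure_mono hsub) hcompl.le) zero_le
      have hval : ∀ k, (νP k : Measure (Xbar × Xbar)) C
          = P {ω | ε ≤ dist (X (p (s (φ k))) ω) (X (q (s (φ k))) ω)} := by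
        intro k
        have : (νP k : Measure (Xbar × Xbar)) C = P (g k ⁻¹' C) :=
          Measure.map_apply (hgm k) hC_closed.measurableSet
        rw [this]; rfl
      have hge : ∀ k, δ ≤ (νP k : Measure (Xbar × Xbar)) C := by
        intro k; rw [hval k]; exact hδle _
      have hδle' : δ ≤ atTop.limsup fun k => (νP k : Measure (Xbar × Xbar)) C := by
        refine Filter.le_limsup_of_frequently_le
          ((Filter.Eventually.of_forall hge).frequently) ?_
        exact Filter.isBoundedUnder_of ⟨⊤, fun _ => le_top⟩
      rw [hμC] at hlimsup
      exact absurd (le_trans hδle' hlimsup) (not_le.2 hδ)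
    -- Step 2: extract an a.e. convergent subsequence.
    have hhalf_pos : ∀ k : ℕ, (0:ℝ) < 2⁻¹ ^ k := fun k => by positivity
    choose M hM using fun k : ℕ =>
      key (2⁻¹ ^ k) (hhalf_pos k) ((2:ℝ≥0∞)⁻¹ ^ k)
        (ENNReal.pow_pos (by norm_num) k)
    set v : ℕ → ℕ := fun k => (Finset.range (k + 1)).sup M with hv
    set u : ℕ → ℕ := fun k => v k + k with hu
    have hv_mono : Monotone v := fun a b hab =>
      Finset.sup_mono (Finset.range_subset_range.2 (by omega))
    have hu_strict : StrictMono u := by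
      refine strictMono_nat_of_lt_succ fun k => ?_
      have := hv_mono (show k ≤ k + 1 by omega)
      simp only [hu]; omega
    have hMu : ∀ j k, j ≤ k → M j ≤ u k := by
      intro j k hjk
      have : M j ≤ v k := Finset.le_sup (Finset.mem_range.2 (by omega))
      simp only [hu]; omega
    set E : ℕ → Set Ω :=
      fun k => {ω | (2:ℝ)⁻¹ ^ k ≤ dist (X (u k) ω) (X (u (k + 1)) ω)} with hE
    have hEk : ∀ k, P (E k) ≤ (2:ℝ≥0∞)⁻¹ ^ k := fun k =>
      (hM k (u k) (hMu k k le_rfl) (u (k + 1)) (hMu k (k + 1) (Nat.le_succ k))).le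
    have hsum : (∑' k, P (E k)) ≠ ∞ := by
      refine ne_top_of_le_ne_top ?_ (ENNReal.tsum_le_tsum hEk)
      rw [ENNReal.tsum_geometric, ENNReal.one_sub_inv_two]
      simp
    have hae := ae_eventually_notMem hsum
    have hae_cauchy : ∀ᵐ ω ∂P, ∃ l : Xbar, Tendsto (fun k => X (u k) ω) atTop (𝓝 l) := by
      filter_upwards [hae] with ω hω
      rw [Filter.eventually_atTop] at hω
      obtain ⟨K, hK⟩ := hω
      have hdlt : ∀ k, K ≤ k → dist (X (u k) ω) (X (u (k + 1)) ω) < (2:ℝ)⁻¹ ^ k := by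
        intro k hk
        have := hK k hk
        simp only [hE, Set.mem_setOf_eq, not_le] at this
        exact this
      have hsummable : Summable (fun k => dist (X (u k) ω) (X (u (k + 1)) ω)) := by
        rw [← summable_nat_add_iff K]
        refine Summable.of_nonneg_of_le (fun k => dist_nonneg)
          (fun k => (hdlt (k + K) (Nat.le_add_left K k)).le) ?_
        have : Summable (fun k : ℕ => (2:ℝ)⁻¹ ^ K * 2⁻¹ ^ k) :=
          (summable_geometric_of_lt_one (by norm_num) (by norm_num)).mul_left _
        refine this.congr fun k => ?_
        rw [pow_add, mul_comm]
      have hcauchy : CauchySeq (fun k => X (u k) ω) :=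
        cauchySeq_of_dist_le_of_summable _ (fun n => le_rfl) hsummable
      exact cauchySeq_tendsto_of_complete hcauchy
    obtain ⟨Y, hYmeas, hYtendsto⟩ :=
      measurable_limit_of_tendsto_metrizable_ae
        (fun k => (hX (u k)).aemeasurable) hae_cauchy
    refine ⟨Y, hYmeas, ?_⟩
    have hTIMu : TendstoInMeasure P (fun k => X (u k)) atTop Y :=
      tendstoInMeasure_of_tendsto_ae
        (fun k => (hX (u k)).aestronglyMeasurable) hYtendsto
    -- Step 3: full sequence converges in probability.
    intro ε hε
    rw [ENNReal.tendsto_atTop_zero]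
    intro δ hδ
    obtain ⟨M₁, hM₁⟩ := key (ε / 2) (by linarith) (δ / 2) (ENNReal.half_pos hδ.ne')
    have htim2 := tendstoInMeasure_iff_dist.1 hTIMu (ε / 2) (by linarith)
    rw [ENNReal.tendsto_atTop_zero] at htim2
    obtain ⟨K₀, hK₀⟩ := htim2 (δ / 2) (ENNReal.half_pos hδ.ne')
    set K := max K₀ M₁ with hKdef
    have huK : M₁ ≤ u K := le_trans (le_max_right _ _) (le_trans (Nat.le_add_left _ _) le_rfl)
    refine ⟨M₁, fun N hN => ?_⟩
    have hsub : {ω | ε < dist (X N ω) (Y ω)} ⊆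
        {ω | ε / 2 ≤ dist (X N ω) (X (u K) ω)} ∪
        {ω | ε / 2 ≤ dist (X (u K) ω) (Y ω)} := by
      intro ω hω
      by_contra hnot
      simp only [Set.mem_union, Set.mem_setOf_eq, not_or, not_le] at hnot
      have h1 : dist (X N ω) (Y ω) ≤
          dist (X N ω) (X (u K) ω) + dist (X (u K) ω) (Y ω) := dist_triangle _ _ _
      have h2 : ε < dist (X N ω) (Y ω) := hω
      linarith [hnot.1, hnot.2]
    calc P {ω | ε < dist (X N ω) (Y ω)}
        ≤ P ({ω | ε / 2 ≤ dist (X N ω) (X (u K) ω)} ∪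
            {ω | ε / 2 ≤ dist (X (u K) ω) (Y ω)}) := measure_mono hsub
      _ ≤ P {ω | ε / 2 ≤ dist (X N ω) (X (u K) ω)}
          + P {ω | ε / 2 ≤ dist (X (u K) ω) (Y ω)} := measure_union_le _ _
      _ ≤ δ / 2 + δ / 2 := by
          refine add_le_add ?_ ?_
          · exact (hM₁ N hN (u K) huK).le
          · exact hK₀ K (le_max_left _ _)
      _ = δ := ENNReal.add_halves δ
end

section
/- Let (X, 𝒮, μ) be a measure space and let K ∈ ℕ. For each k ∈ {1, …, K}, let f_k ∈ L¹(X, μ) and let (B_{n,k})_{n∈ℕ} ⊆ 𝒮 be a sequence of pairwise disjoint measurable subsets of X. Then liminf_{n→∞} ( n · Σ_{k=1}^K ∫_{B_{n,k}} |f_k| dμ ) = 0. -/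
open MeasureTheory
open scoped ENNReal NNReal

lemma harm_top : ∑' n : ℕ, ((n : ℝ≥0∞) + 1)⁻¹ = ⊤ := by
  by_contra h
  have hcoe : ∀ n : ℕ, ((((n : ℝ≥0) + 1)⁻¹ : ℝ≥0) : ℝ≥0∞) = ((n : ℝ≥0∞) + 1)⁻¹ := by
    intro n
    rw [ENNReal.coe_inv (by positivity)]
    push_cast
    ring_nf
  have h1 : (∑' n : ℕ, ((((n : ℝ≥0) + 1)⁻¹ : ℝ≥0) : ℝ≥0∞)) ≠ ⊤ := by
    simpa only [hcoe] using h
  have h2 : Summable (fun n : ℕ => ((n : ℝ≥0) + 1)⁻¹) :=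
    ENNReal.tsum_coe_ne_top_iff_summable.mp h1
  have h3 : Summable (fun n : ℕ => ((n : ℝ) + 1)⁻¹) := by
    have := NNReal.summable_coe.mpr h2
    simpa using this
  have h4 : Summable (fun n : ℕ => ((n : ℝ))⁻¹) := by
    rw [← summable_nat_add_iff 1]
    push_cast
    exact h3
  exact Real.not_summable_natCast_inv h4

lemma aux_liminf (g : ℕ → ℝ≥0∞) (hg : ∑' n, g n ≠ ⊤) :
    Filter.liminf (fun n : ℕ => (n : ℝ≥0∞) * g n) Filter.atTop = 0 := by
  by_contra h
  have hL : 0 < Filter.liminf (fun n : ℕ => (n : ℝ≥0∞) * g n) Filter.atTop :=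
    pos_iff_ne_zero.mpr h
  obtain ⟨ε, hε0, hεL⟩ := exists_between hL
  have hεtop : ε ≠ ⊤ := (hεL.trans_le le_top).ne
  have hev := Filter.eventually_lt_of_lt_liminf hεL
  obtain ⟨N, hN⟩ := Filter.eventually_atTop.mp hev
  set M := max N 1 with hM
  have hM1 : 1 ≤ M := le_max_right _ _
  have key : ∀ n : ℕ, ε / ((n : ℝ≥0∞) + M) ≤ g (n + M) := by
    intro n
    have h1 : ε < (((n + M : ℕ)) : ℝ≥0∞) * g (n + M) :=
      hN _ (le_trans (le_max_left _ _) (Nat.le_add_left M n))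
    have hnM0 : ((n : ℝ≥0∞) + M) ≠ 0 := by
      have : (0:ℝ≥0∞) < M := by exact_mod_cast Nat.lt_of_lt_of_le Nat.zero_lt_one hM1
      exact (lt_of_lt_of_le this (le_add_self)).ne'
    have hnMt : ((n : ℝ≥0∞) + M) ≠ ⊤ := by
      simp [ENNReal.add_ne_top]
    rw [ENNReal.div_le_iff hnM0 hnMt]
    push_cast at h1
    calc ε ≤ ((n : ℝ≥0∞) + M) * g (n + M) := le_of_lt (by rw [mul_comm] at h1 ⊢; exact h1)
    _ = g (n + M) * ((n : ℝ≥0∞) + M) := mul_comm _ _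
  have hMt : ((M : ℝ≥0∞)) ≠ ⊤ := ENNReal.natCast_ne_top M
  have hM0 : ((M : ℝ≥0∞)) ≠ 0 := by
    simp; omega
  have hdiv : ∀ n : ℕ, (ε / M) * ((n : ℝ≥0∞) + 1)⁻¹ ≤ ε / ((n : ℝ≥0∞) + M) := by
    intro n
    have h1 : (ε / M) * ((n : ℝ≥0∞) + 1)⁻¹ = ε / ((M : ℝ≥0∞) * ((n : ℝ≥0∞) + 1)) := by
      rw [div_eq_mul_inv, div_eq_mul_inv, mul_assoc,
        ENNReal.mul_inv (Or.inl hM0) (Or.inl hMt)]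
    rw [h1]
    apply ENNReal.div_le_div le_rfl
    calc (n : ℝ≥0∞) + M ≤ (M : ℝ≥0∞) * n + M * 1 := by
          gcongr
          · exact le_mul_of_one_le_left zero_le (by exact_mod_cast hM1)
          · simp
    _ = (M : ℝ≥0∞) * ((n : ℝ≥0∞) + 1) := by ring
  have htail : (⊤ : ℝ≥0∞) ≤ ∑' n, g (n + M) := by
    have h1 : (ε / M) * ∑' n : ℕ, ((n : ℝ≥0∞) + 1)⁻¹ ≤ ∑' n, g (n + M) := by
      rw [← ENNReal.tsum_mul_left]
      exact ENNReal.tsum_le_tsum fun n => le_trans (hdiv n) (key n)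
    rwa [harm_top, ENNReal.mul_top (by
      simp only [ne_eq, ENNReal.div_eq_zero_iff, hMt, or_false]
      exact hε0.ne')] at h1
  have : (⊤ : ℝ≥0∞) ≤ ∑' n, g n :=
    le_trans htail (ENNReal.tsum_comp_le_tsum_of_injective (add_left_injective M) g)
  exact hg (top_le_iff.mp this)

/-- Lemma 8.2 of the paper: for finitely many integrable functions `f_k` on a
measure space and, for each `k`, a sequence `(B_{n,k})_n` of pairwise disjoint
measurable sets, one has `liminf_n ( n · Σ_k ∫_{B_{n,k}} |f_k| dμ ) = 0`. -/
theorem stmt8 {X : Type*} [MeasurableSpace X] (μ : Measure X) (K : ℕ)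
    (f : Fin K → X → ℝ) (hf : ∀ k, Integrable (f k) μ)
    (B : ℕ → Fin K → Set X) (hB : ∀ n k, MeasurableSet (B n k))
    (hdisj : ∀ k, Pairwise fun n n' => Disjoint (B n k) (B n' k)) :
    Filter.liminf
      (fun n : ℕ => (n : ℝ≥0∞) * ∑ k, ∫⁻ x in B n k, ENNReal.ofReal |f k x| ∂μ)
      Filter.atTop = 0 := by
  apply aux_liminf
  have hswap : ∑' n : ℕ, ∑ k, ∫⁻ x in B n k, ENNReal.ofReal |f k x| ∂μ
      = ∑ k, ∑' n : ℕ, ∫⁻ x in B n k, ENNReal.ofReal |f k x| ∂μ :=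
    Summable.tsum_finsetSum fun k _ => ENNReal.summable
  rw [hswap]
  apply ne_of_lt
  apply ENNReal.sum_lt_top.mpr
  intro k _
  have h1 : ∑' n : ℕ, ∫⁻ x in B n k, ENNReal.ofReal |f k x| ∂μ
      = ∫⁻ x in ⋃ n, B n k, ENNReal.ofReal |f k x| ∂μ :=
    (lintegral_iUnion (fun n => hB n k) (hdisj k) _).symm
  rw [h1]
  calc ∫⁻ x in ⋃ n, B n k, ENNReal.ofReal |f k x| ∂μ
      ≤ ∫⁻ x, ENNReal.ofReal |f k x| ∂μ := setLIntegral_le_lintegral _ _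
  _ = ∫⁻ x, ‖f k x‖₊ ∂μ := by
      simp_rw [← Real.norm_eq_abs, ofReal_norm, enorm_eq_nnnorm]
  _ < ⊤ := (hf k).2
end
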